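/- arXiv:2504.18877 — 3 statements merged into one kernel-verified Lean document; each statement's English description precedes it below -/
import Mathlib

section
/- Let a < b be real numbers, let λ ≤ 0, and let f : ℝ → ℝ be locally Lipschitz with primitive F(s) = ∫₀^s f(t) dt satisfying F(s) ≤ 0 for every s ∈ ℝ. If u : [a,b] → ℝ is twice continuously differentiable on [a,b], satisfies −u''(x) = λ u(x) + f(u(x)) for all x ∈ [a,b], and u(a) = u(b) = 0, then u is identically zero on [a,b]. -/
open MeasureTheory Real Set

/-- One-dimensional uniqueness (Lemma 2.1, case `λ ≤ 0`): if `f` is locally Lipschitz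
with nonpositive primitive and `u` is a `C²` solution of `−u'' = λu + f(u)` on `[a,b]`
with `u(a) = u(b) = 0` and `λ ≤ 0`, then `u ≡ 0` on `[a,b]`. -/
theorem stmt1 (a b : ℝ) (hab : a < b) (lam : ℝ) (hlam : lam ≤ 0)
    (f : ℝ → ℝ) (hf : LocallyLipschitz f)
    (hF : ∀ s : ℝ, (∫ t in (0:ℝ)..s, f t) ≤ 0)
    (u u' u'' : ℝ → ℝ)
    (hderiv1 : ∀ x ∈ Set.Icc a b, HasDerivWithinAt u (u' x) (Set.Icc a b) x)
    (hderiv2 : ∀ x ∈ Set.Icc a b, HasDerivWithinAt u' (u'' x) (Set.Icc a b) x)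
    (hcont : ContinuousOn u'' (Set.Icc a b))
    (heq : ∀ x ∈ Set.Icc a b, -u'' x = lam * u x + f (u x))
    (hua : u a = 0) (hub : u b = 0) :
    ∀ x ∈ Set.Icc a b, u x = 0 := by
  have hfc : Continuous f := hf.continuous
  set F : ℝ → ℝ := fun s => ∫ t in (0:ℝ)..s, f t with hFdef
  have hFd : ∀ s, HasDerivAt F (f s) s := fun s =>
    intervalIntegral.integral_hasDerivAt_right (hfc.intervalIntegrable 0 s)
      (hfc.stronglyMeasurableAtFilter _ _) hfc.continuousAt
  have hF0 : F 0 = 0 := intervalIntegral.integral_same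
  have hf0 : f 0 = 0 := by
    have hmax : IsLocalMax F 0 := Filter.Eventually.of_forall fun s => by
      simpa [hF0] using hF s
    exact hmax.hasDerivAt_eq_zero (hFd 0)
  set G : ℝ → ℝ := fun s => lam * s ^ 2 / 2 + F s with hGdef
  have hGd : ∀ s, HasDerivAt G (lam * s + f s) s := by
    intro s
    have h1 : HasDerivAt (fun y : ℝ => lam * y ^ 2 / 2) (lam * s) s := by
      have := ((hasDerivAt_pow 2 s).const_mul lam).div_const 2
      refine this.congr_deriv ?_
      simp; ring
    exact h1.add (hFd s)
  have hG0 : G 0 = 0 := by simp [hGdef, hF0]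
  have hGle : ∀ s, G s ≤ 0 := by
    intro s
    have h1 : lam * s ^ 2 / 2 ≤ 0 := by nlinarith [sq_nonneg s]
    have h2 := hF s
    simp only [hGdef]
    exact add_nonpos h1 h2
  -- the energy is constant
  set E : ℝ → ℝ := fun x => (u' x) ^ 2 / 2 + G (u x) with hEdef
  have hEd : ∀ x ∈ Icc a b, HasDerivWithinAt E 0 (Icc a b) x := by
    intro x hx
    have h1 : HasDerivWithinAt (fun y => (u' y) ^ 2 / 2)
        ((2 : ℕ) * (u' x) ^ 1 * u'' x / 2) (Icc a b) x :=
      ((hderiv2 x hx).pow 2).div_const 2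
    have h2 : HasDerivWithinAt (fun y => G (u y)) ((lam * u x + f (u x)) * u' x) (Icc a b) x :=
      (hGd (u x)).comp_hasDerivWithinAt x (hderiv1 x hx)
    have h3 := h1.add h2
    refine h3.congr_deriv ?_
    rw [← heq x hx]
    push_cast
    ring
  have hEcont : ContinuousOn E (Icc a b) := fun x hx => (hEd x hx).continuousWithinAt
  have hmemIci : ∀ x ∈ Ico a b, Icc a b ∈ nhdsWithin x (Ici x) := by
    intro x hx
    have h1 : Iio b ∈ nhdsWithin x (Ici x) := nhdsWithin_le_nhds (Iio_mem_nhds hx.2)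
    filter_upwards [h1, self_mem_nhdsWithin] with y hy1 hy2
    exact ⟨le_trans hx.1 hy2, le_of_lt hy1⟩
  have hEconst : ∀ x ∈ Icc a b, E x = E a := by
    apply constant_of_has_deriv_right_zero hEcont
    intro x hx
    exact (hEd x ⟨hx.1, hx.2.le⟩).mono_of_mem_nhdsWithin (hmemIci x hx)
  -- Rolle's theorem gives an interior critical point
  have hucont : ContinuousOn u (Icc a b) := fun x hx => (hderiv1 x hx).continuousWithinAt
  have huIoo : ∀ x ∈ Ioo a b, HasDerivAt u (u' x) x := fun x hx =>
    (hderiv1 x (Ioo_subset_Icc_self hx)).hasDerivAt (Icc_mem_nhds hx.1 hx.2)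
  obtain ⟨c₀, hc₀, hc₀0⟩ := exists_hasDerivAt_eq_zero hab hucont (hua.trans hub.symm) huIoo
  -- deduce u' a = 0
  have hu'a : u' a = 0 := by
    have hEa : E a = (u' a) ^ 2 / 2 := by simp [hEdef, hua, hG0]
    have hEc : E c₀ = G (u c₀) := by simp [hEdef, hc₀0]
    have h1 : E c₀ = E a := hEconst c₀ (Ioo_subset_Icc_self hc₀)
    have h2 := hGle (u c₀)
    have h3 : (u' a) ^ 2 / 2 ≤ 0 := by rw [← hEa, ← h1, hEc]; exact h2
    nlinarith [sq_nonneg (u' a)]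
  -- the ODE system
  set w : ℝ → ℝ × ℝ := fun x => (u x, u' x) with hwdef
  set V : ℝ × ℝ → ℝ × ℝ := fun p => (p.2, -(lam * p.1 + f p.1)) with hVdef
  have hV0 : V (0, 0) = (0, 0) := by simp [hVdef, hf0]
  have hw' : ∀ x ∈ Icc a b, HasDerivWithinAt w (V (w x)) (Icc a b) x := by
    intro x hx
    have h1 := (hderiv1 x hx).prodMk (hderiv2 x hx)
    have h2 : V (w x) = (u' x, u'' x) := by
      refine Prod.ext rfl ?_
      have := heq x hx
      simp only [hVdef, hwdef]
      linarith
    rw [h2]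
    exact h1
  have hwcont : ContinuousOn w (Icc a b) := fun x hx => (hw' x hx).continuousWithinAt
  -- local Lipschitz property of V near the origin
  obtain ⟨K, t, ht, hKf⟩ := hf 0
  obtain ⟨ε, hε, hball⟩ := Metric.mem_nhds_iff.mp ht
  set U : Set (ℝ × ℝ) := {p | p.1 ∈ Metric.ball (0 : ℝ) ε} with hUdef
  have hU0 : ((0 : ℝ), (0 : ℝ)) ∈ U := by simp [hUdef, hε]
  set K' : NNReal := 1 + ‖lam‖₊ + K with hK'def
  have hVlip : LipschitzOnWith K' V U := by
    rw [lipschitzOnWith_iff_dist_le_mul]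
    intro p hp q hq
    have hfd : dist (f p.1) (f q.1) ≤ (K : ℝ) * dist p.1 q.1 :=
      lipschitzOnWith_iff_dist_le_mul.mp hKf p.1 (hball hp) q.1 (hball hq)
    have hd1 : (0:ℝ) ≤ dist p.1 q.1 := dist_nonneg
    have hd2 : (0:ℝ) ≤ dist p.2 q.2 := dist_nonneg
    have hmax1 : dist p.1 q.1 ≤ dist p q := by rw [Prod.dist_eq]; exact le_max_left _ _
    have hmax2 : dist p.2 q.2 ≤ dist p q := by rw [Prod.dist_eq]; exact le_max_right _ _
    have hK' : (K' : ℝ) = 1 + |lam| + K := by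
      simp [hK'def, Real.norm_eq_abs]
    have hVsnd : dist (V p).2 (V q).2 ≤ (|lam| + K) * dist p.1 q.1 := by
      simp only [hVdef]
      rw [dist_neg_neg]
      calc dist (lam * p.1 + f p.1) (lam * q.1 + f q.1)
          ≤ dist (lam * p.1) (lam * q.1) + dist (f p.1) (f q.1) := dist_add_add_le _ _ _ _
        _ ≤ |lam| * dist p.1 q.1 + K * dist p.1 q.1 := by
            refine add_le_add (le_of_eq ?_) hfd
            rw [Real.dist_eq, Real.dist_eq, ← abs_mul]
            ring_nf
        _ = (|lam| + K) * dist p.1 q.1 := by ring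
    have hVfst : dist (V p).1 (V q).1 = dist p.2 q.2 := rfl
    rw [Prod.dist_eq]
    have hKnn : (0:ℝ) ≤ K := K.coe_nonneg
    have habs : (0:ℝ) ≤ |lam| := abs_nonneg lam
    have hdnn : (0:ℝ) ≤ dist p q := dist_nonneg
    apply max_le
    · rw [hVfst, hK']; nlinarith
    · rw [hK']
      calc dist (V p).2 (V q).2 ≤ (|lam| + K) * dist p.1 q.1 := hVsnd
        _ ≤ (1 + |lam| + K) * dist p q := by nlinarith
  -- continuous induction
  set S : Set ℝ := {x | x ∈ Icc a b ∧ ∀ y ∈ Icc a x, w y = (0, 0)} with hSdef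
  have haS : a ∈ S := by
    refine ⟨left_mem_Icc.mpr hab.le, fun y hy => ?_⟩
    have hya : y = a := le_antisymm hy.2 hy.1
    subst hya
    exact Prod.ext hua hu'a
  have hSne : S.Nonempty := ⟨a, haS⟩
  have hbdd : BddAbove S := ⟨b, fun x hx => hx.1.2⟩
  set c := sSup S with hcdef
  have hcmem : c ∈ Icc a b := ⟨le_csSup hbdd haS, csSup_le hSne fun x hx => hx.1.2⟩
  have hwlt : ∀ y, a ≤ y → y < c → w y = (0, 0) := by
    intro y hay hyc
    obtain ⟨x, hxS, hx⟩ := exists_lt_of_lt_csSup hSne hyc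
    exact hxS.2 y ⟨hay, hx.le⟩
  have hwcc : w c = (0, 0) := by
    rcases eq_or_lt_of_le hcmem.1 with heq2 | hac
    · rw [← heq2]; exact Prod.ext hua hu'a
    · have hsub : Ico a c ⊆ Icc a b := fun z hz => ⟨hz.1, hz.2.le.trans hcmem.2⟩
      have hcw : Filter.Tendsto w (nhdsWithin c (Ico a c)) (nhds (w c)) :=
        (hwcont c hcmem).mono hsub
      have hne : (nhdsWithin c (Ico a c)).NeBot := by
        rw [← mem_closure_iff_nhdsWithin_neBot, closure_Ico hac.ne]
        exact right_mem_Icc.mpr hac.le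
      have hcw0 : Filter.Tendsto w (nhdsWithin c (Ico a c)) (nhds ((0:ℝ), (0:ℝ))) := by
        apply Filter.Tendsto.congr' _ tendsto_const_nhds
        filter_upwards [self_mem_nhdsWithin] with z hz
        exact (hwlt z hz.1 hz.2).symm
      exact tendsto_nhds_unique hcw hcw0
  have hwc : ∀ y ∈ Icc a c, w y = (0, 0) := by
    intro y hy
    rcases eq_or_lt_of_le hy.2 with heq' | hyc
    · rw [heq']; exact hwcc
    · exact hwlt y hy.1 hyc
  have hcS : c ∈ S := ⟨hcmem, hwc⟩
  -- show c = b
  have hcb : c = b := by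
    by_contra hne
    have hcb : c < b := lt_of_le_of_ne hcmem.2 hne
    have hwc0 : w c = (0, 0) := hwc c ⟨hcmem.1, le_refl c⟩
    have huc : u c = 0 := congrArg Prod.fst hwc0
    obtain ⟨δ, hδ, hδ'⟩ := Metric.continuousWithinAt_iff.mp (hucont c hcmem) ε hε
    set d := min b (c + δ / 2) with hd
    have hcd : c < d := lt_min hcb (by linarith)
    have hdb : d ≤ b := min_le_left _ _
    have hdc : d ≤ c + δ / 2 := min_le_right _ _
    have hsub : Icc c d ⊆ Icc a b := fun y hy => ⟨hcmem.1.trans hy.1, hy.2.trans hdb⟩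
    have key : EqOn w (fun _ => ((0:ℝ), (0:ℝ))) (Icc c d) := by
      refine ODE_solution_unique_of_mem_Icc_right (v := fun _ => V) (s := fun _ => U)
        (fun _ _ => hVlip) (hwcont.mono hsub) ?_ ?_ continuousOn_const ?_ ?_ ?_
      · intro x hx
        have hxab : x ∈ Icc a b := hsub (Ico_subset_Icc_self hx)
        refine (hw' x hxab).mono_of_mem_nhdsWithin ?_
        exact hmemIci x ⟨hxab.1, lt_of_lt_of_le hx.2 hdb⟩
      · intro x hx
        have hxab : x ∈ Icc a b := hsub (Ico_subset_Icc_self hx)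
        have hdist : dist x c < δ := by
          rw [Real.dist_eq, abs_of_nonneg (by linarith [hx.1] : (0:ℝ) ≤ x - c)]
          have := hx.2
          linarith
        have := hδ' hxab hdist
        rw [huc] at this
        simpa [hUdef, hwdef] using this
      · intro x hx
        have h0 : HasDerivWithinAt (fun _ : ℝ => ((0:ℝ), (0:ℝ))) ((0:ℝ), (0:ℝ)) (Ici x) x :=
          hasDerivWithinAt_const x _ _
        exact h0.congr_deriv hV0.symm
      · intro x hx
        exact hU0
      · exact hwc0
    have hdS : d ∈ S := by
      refine ⟨⟨hcmem.1.trans hcd.le, hdb⟩, fun y hy => ?_⟩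
      rcases le_or_gt y c with hyc | hyc
      · exact hwc y ⟨hy.1, hyc⟩
      · exact key ⟨hyc.le, hy.2⟩
    have : d ≤ c := le_csSup hbdd hdS
    linarith
  intro x hx
  have := hwc x (hcb ▸ hx)
  exact congrArg Prod.fst this
end

section
/- Let a < b and λ be real numbers satisfying 0 < λ < π²/(b−a)². Then there exists a unique M > 0 such that ∫₀¹ ds / √(M s²(1−s)² + λ(1−s²)) = (b−a)/2. -/
open MeasureTheory Real Set

lemma sin_image_Ioo : Real.sin '' Set.Ioo 0 (π/2) = Set.Ioo 0 1 := by
  apply Subset.antisymm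
  · rintro _ ⟨x, hx, rfl⟩
    refine ⟨Real.sin_pos_of_pos_of_lt_pi hx.1 (by linarith [hx.2, Real.pi_pos]), ?_⟩
    calc Real.sin x < Real.sin (π/2) := by
          apply Real.strictMonoOn_sin ⟨by linarith [hx.1, Real.pi_pos], hx.2.le⟩
            ⟨by linarith [Real.pi_pos], le_refl _⟩ hx.2
      _ = 1 := Real.sin_pi_div_two
  · have := intermediate_value_Ioo (a := (0:ℝ)) (b := π/2) (by positivity)
      (Real.continuous_sin.continuousOn)
    simpa [Real.sin_pi_div_two] using this

lemma sin_sub : Set.Ioo (0:ℝ) (π/2) ⊆ Set.Icc (-(π/2)) (π/2) :=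
  fun x hx => ⟨by linarith [hx.1, Real.pi_pos], hx.2.le⟩

lemma integrable_inv_sqrt : IntegrableOn (fun s => 1 / Real.sqrt (1 - s^2)) (Set.Ioo 0 1) := by
  rw [← sin_image_Ioo,
    integrableOn_image_iff_integrableOn_abs_deriv_smul measurableSet_Ioo
      (fun x _ => (Real.hasDerivAt_sin x).hasDerivWithinAt)
      (Real.injOn_sin.mono sin_sub)]
  apply ((integrableOn_const_iff (C := (1:ℝ))).2 (Or.inr (by simp [Real.pi_pos]))).congr_fun ?_ measurableSet_Ioo
  · intro θ hθ
    have hc : 0 < Real.cos θ := Real.cos_pos_of_mem_Ioo ⟨by linarith [hθ.1, Real.pi_pos], hθ.2⟩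
    have h1 : 1 - Real.sin θ ^ 2 = Real.cos θ ^ 2 := by
      have := Real.sin_sq_add_cos_sq θ; linarith
    simp [h1, Real.sqrt_sq hc.le, abs_of_pos hc, smul_eq_mul, mul_inv_cancel₀ hc.ne']

lemma integral_inv_sqrt : ∫ s in Set.Ioo (0:ℝ) 1, 1 / Real.sqrt (1 - s^2) = π / 2 := by
  rw [← sin_image_Ioo,
    integral_image_eq_integral_abs_deriv_smul measurableSet_Ioo
      (fun x _ => (Real.hasDerivAt_sin x).hasDerivWithinAt)
      (Real.injOn_sin.mono sin_sub)]
  rw [setIntegral_congr_fun measurableSet_Ioo (g := fun _ => (1:ℝ)) ?_]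
  · simp [Real.volume_Ioo]; positivity
  · intro θ hθ
    have hc : 0 < Real.cos θ := Real.cos_pos_of_mem_Ioo ⟨by linarith [hθ.1, Real.pi_pos], hθ.2⟩
    have h1 : 1 - Real.sin θ ^ 2 = Real.cos θ ^ 2 := by
      have := Real.sin_sq_add_cos_sq θ; linarith
    simp [h1, Real.sqrt_sq hc.le, abs_of_pos hc, smul_eq_mul, mul_inv_cancel₀ hc.ne']

lemma g_int (lam : ℝ) (hlam : 0 < lam) :
    IntegrableOn (fun s => 1 / Real.sqrt (lam * (1 - s^2))) (Set.Ioo 0 1) := by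
  have hg : (fun s : ℝ => 1 / Real.sqrt (lam * (1 - s^2)))
      = fun s => (Real.sqrt lam)⁻¹ * (1 / Real.sqrt (1 - s^2)) := by
    funext s; rw [Real.sqrt_mul hlam.le]; simp [one_div, mul_inv]; ring
  rw [hg]; exact integrable_inv_sqrt.const_mul _

lemma g_val (lam : ℝ) (hlam : 0 < lam) :
    ∫ s in Set.Ioo (0:ℝ) 1, 1 / Real.sqrt (lam * (1 - s^2)) = π / (2 * Real.sqrt lam) := by
  have hg : (fun s : ℝ => 1 / Real.sqrt (lam * (1 - s^2)))
      = fun s => (Real.sqrt lam)⁻¹ * (1 / Real.sqrt (1 - s^2)) := by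
    funext s; rw [Real.sqrt_mul hlam.le]; simp [one_div, mul_inv]; ring
  rw [hg, integral_const_mul, integral_inv_sqrt]
  have : Real.sqrt lam ≠ 0 := by positivity
  field_simp

lemma sqrt_tendsto_atTop : Filter.Tendsto Real.sqrt Filter.atTop Filter.atTop := by
  apply Filter.tendsto_atTop_atTop.2
  intro b
  refine ⟨(max b 0)^2, fun a ha => ?_⟩
  calc b ≤ max b 0 := le_max_left _ _
    _ = Real.sqrt ((max b 0)^2) := (Real.sqrt_sq (le_max_right _ _)).symm
    _ ≤ Real.sqrt a := Real.sqrt_le_sqrt ha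

noncomputable def FF (lam M : ℝ) : ℝ :=
  ∫ s in Set.Ioo (0:ℝ) 1, 1 / Real.sqrt (M * s ^ 2 * (1 - s) ^ 2 + lam * (1 - s ^ 2))

section aux
variable {lam : ℝ}

lemma h1aux (hlam : 0 < lam) (s : ℝ) (hs : s ∈ Set.Ioo (0:ℝ) 1) : 0 < lam * (1 - s ^ 2) := by
  obtain ⟨h0, h1⟩ := hs
  have : 0 < 1 - s ^ 2 := by nlinarith
  exact mul_pos hlam this

lemma h2aux {M : ℝ} (hM : 0 ≤ M) (s : ℝ) (hs : s ∈ Set.Ioo (0:ℝ) 1) :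
    lam * (1 - s ^ 2) ≤ M * s ^ 2 * (1 - s) ^ 2 + lam * (1 - s ^ 2) := by
  nlinarith [mul_nonneg (mul_nonneg hM (sq_nonneg s)) (sq_nonneg (1 - s))]

lemma hmeasaux (M : ℝ) :
    AEStronglyMeasurable (fun s => 1 / Real.sqrt (M * s ^ 2 * (1 - s) ^ 2 + lam * (1 - s ^ 2)))
      (volume.restrict (Set.Ioo (0:ℝ) 1)) :=
  Measurable.aestronglyMeasurable (by fun_prop)

lemma hboundaux (hlam : 0 < lam) {M : ℝ} (hM : 0 ≤ M) :
    ∀ᵐ s ∂(volume.restrict (Set.Ioo (0:ℝ) 1)),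
      ‖1 / Real.sqrt (M * s ^ 2 * (1 - s) ^ 2 + lam * (1 - s ^ 2))‖
        ≤ 1 / Real.sqrt (lam * (1 - s ^ 2)) := by
  filter_upwards [ae_restrict_mem measurableSet_Ioo] with s hs
  have h0 := h1aux hlam s hs
  have hle := h2aux (lam := lam) hM s hs
  rw [Real.norm_eq_abs, abs_of_nonneg (by positivity)]
  exact one_div_le_one_div_of_le (Real.sqrt_pos.2 h0) (Real.sqrt_le_sqrt hle)

lemma hintaux (hlam : 0 < lam) {M : ℝ} (hM : 0 ≤ M) :
    Integrable (fun s => 1 / Real.sqrt (M * s ^ 2 * (1 - s) ^ 2 + lam * (1 - s ^ 2)))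
      (volume.restrict (Set.Ioo (0:ℝ) 1)) :=
  (g_int lam hlam).mono' (hmeasaux M) (hboundaux hlam hM)

lemma hantiaux (hlam : 0 < lam) {M M' : ℝ} (hM : 0 ≤ M) (hMM' : M < M') :
    FF lam M' < FF lam M := by
  have hM' : 0 ≤ M' := hM.trans hMM'.le
  set d : ℝ → ℝ := fun s => 1 / Real.sqrt (M * s ^ 2 * (1 - s) ^ 2 + lam * (1 - s ^ 2))
      - 1 / Real.sqrt (M' * s ^ 2 * (1 - s) ^ 2 + lam * (1 - s ^ 2)) with hd_def
  have hstrict : ∀ s ∈ Set.Ioo (0:ℝ) 1, 0 < d s := by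
    intro s hs
    have h0 := h1aux hlam s hs
    have hpos : 0 < M * s ^ 2 * (1 - s) ^ 2 + lam * (1 - s ^ 2) :=
      lt_of_lt_of_le h0 (h2aux hM s hs)
    have hlt : M * s ^ 2 * (1 - s) ^ 2 + lam * (1 - s ^ 2)
        < M' * s ^ 2 * (1 - s) ^ 2 + lam * (1 - s ^ 2) := by
      nlinarith [mul_pos (mul_pos (sub_pos.2 hMM') (pow_pos hs.1 2))
        (pow_pos (by linarith [hs.2] : (0:ℝ) < 1 - s) 2)]
    have := one_div_lt_one_div_of_lt (Real.sqrt_pos.2 hpos) (Real.sqrt_lt_sqrt hpos.le hlt)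
    simp only [hd_def]; linarith
  have hdint : IntegrableOn d (Set.Ioo (0:ℝ) 1) := (hintaux hlam hM).sub (hintaux hlam hM')
  have hdiff : 0 < ∫ s in Set.Ioo (0:ℝ) 1, d s := by
    rw [setIntegral_pos_iff_support_of_nonneg_ae ?_ hdint]
    · refine lt_of_lt_of_le ?_ (measure_mono (fun s hs =>
        (⟨(hstrict s hs).ne', hs⟩ : s ∈ Function.support d ∩ Set.Ioo 0 1)))
      simp [Real.volume_Ioo]
    · filter_upwards [ae_restrict_mem measurableSet_Ioo] with s hs
      exact (hstrict s hs).le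
  have := integral_sub (hintaux hlam hM) (hintaux hlam hM')
  simp only [hd_def] at hdiff
  rw [this] at hdiff
  have h2 : FF lam M - FF lam M' = (∫ s in Set.Ioo (0:ℝ) 1,
      1 / Real.sqrt (M * s ^ 2 * (1 - s) ^ 2 + lam * (1 - s ^ 2)))
      - ∫ s in Set.Ioo (0:ℝ) 1, 1 / Real.sqrt (M' * s ^ 2 * (1 - s) ^ 2 + lam * (1 - s ^ 2)) := rfl
  linarith [hdiff, h2]

lemma hcontaux (hlam : 0 < lam) {M₀ : ℝ} (hM₀ : 0 < M₀) : ContinuousAt (FF lam) M₀ := by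
  apply continuousAt_of_dominated (bound := fun s => 1 / Real.sqrt (lam * (1 - s ^ 2)))
  · exact Filter.Eventually.of_forall (hmeasaux (lam := lam))
  · exact (eventually_gt_nhds hM₀).mono fun M hM => hboundaux hlam hM.le
  · exact g_int lam hlam
  · filter_upwards [ae_restrict_mem measurableSet_Ioo] with s hs
    have hpos : 0 < M₀ * s ^ 2 * (1 - s) ^ 2 + lam * (1 - s ^ 2) :=
      lt_of_lt_of_le (h1aux hlam s hs) (h2aux hM₀.le s hs)
    exact ContinuousAt.div continuousAt_const
      ((Real.continuous_sqrt.comp (by fun_prop)).continuousAt)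
      (Real.sqrt_pos.2 hpos).ne'

lemma hlim0aux (hlam : 0 < lam) :
    Filter.Tendsto (FF lam) (nhdsWithin 0 (Set.Ioi 0)) (nhds (π / (2 * Real.sqrt lam))) := by
  have h := tendsto_integral_filter_of_dominated_convergence
      (μ := volume.restrict (Set.Ioo (0:ℝ) 1))
      (F := fun M s => 1 / Real.sqrt (M * s ^ 2 * (1 - s) ^ 2 + lam * (1 - s ^ 2)))
      (f := fun s => 1 / Real.sqrt (lam * (1 - s ^ 2)))
      (l := nhdsWithin 0 (Set.Ioi 0))
      (fun s => 1 / Real.sqrt (lam * (1 - s ^ 2)))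
      (Filter.Eventually.of_forall (hmeasaux (lam := lam)))
      (eventually_mem_nhdsWithin.mono fun M hM => hboundaux hlam (le_of_lt hM))
      (g_int lam hlam) ?_
  · rw [show (∫ s in Set.Ioo (0:ℝ) 1, 1 / Real.sqrt (lam * (1 - s ^ 2)))
        = π / (2 * Real.sqrt lam) from g_val lam hlam] at h
    exact h
  · filter_upwards [ae_restrict_mem measurableSet_Ioo] with s hs
    have hpos : 0 < 0 * s ^ 2 * (1 - s) ^ 2 + lam * (1 - s ^ 2) := by
      simpa using h1aux hlam s hs
    have hc : ContinuousAt (fun M => 1 / Real.sqrt (M * s ^ 2 * (1 - s) ^ 2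
        + lam * (1 - s ^ 2))) 0 :=
      ContinuousAt.div continuousAt_const
        ((Real.continuous_sqrt.comp (by fun_prop)).continuousAt)
        (Real.sqrt_pos.2 hpos).ne'
    refine Filter.Tendsto.mono_left ?_ nhdsWithin_le_nhds
    simpa using hc.tendsto

lemma hlimtopaux (hlam : 0 < lam) :
    Filter.Tendsto (FF lam) Filter.atTop (nhds 0) := by
  have h := tendsto_integral_filter_of_dominated_convergence
      (μ := volume.restrict (Set.Ioo (0:ℝ) 1))
      (F := fun M s => 1 / Real.sqrt (M * s ^ 2 * (1 - s) ^ 2 + lam * (1 - s ^ 2)))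
      (f := fun _ => (0:ℝ))
      (l := Filter.atTop)
      (fun s => 1 / Real.sqrt (lam * (1 - s ^ 2)))
      (Filter.Eventually.of_forall (hmeasaux (lam := lam)))
      ((Filter.eventually_ge_atTop (0:ℝ)).mono fun M hM => hboundaux hlam hM)
      (g_int lam hlam) ?_
  · have h2 : Filter.Tendsto (FF lam) Filter.atTop
        (nhds (∫ _ in Set.Ioo (0:ℝ) 1, (0:ℝ))) := h
    simpa using h2
  · filter_upwards [ae_restrict_mem measurableSet_Ioo] with s hs
    have hk : 0 < s ^ 2 * (1 - s) ^ 2 :=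
      mul_pos (pow_pos hs.1 2) (pow_pos (by linarith [hs.2] : (0:ℝ) < 1 - s) 2)
    have hinner : Filter.Tendsto (fun M => M * s ^ 2 * (1 - s) ^ 2 + lam * (1 - s ^ 2))
        Filter.atTop Filter.atTop := by
      apply Filter.tendsto_atTop_add_const_right
      have := Filter.Tendsto.atTop_mul_const hk (Filter.tendsto_id (α := ℝ))
      simpa [mul_assoc] using this
    have hsq := sqrt_tendsto_atTop.comp hinner
    have := tendsto_inv_atTop_zero.comp hsq
    simpa [one_div, Function.comp_def] using this

end aux

/-- Lemma 2.4: for `0 < λ < π²/(b−a)²` there is a unique `M > 0` with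
`∫₀¹ ds/√(M s²(1−s)² + λ(1−s²)) = (b−a)/2`. -/
theorem stmt5 (a b lam : ℝ) (hab : a < b) (hlam : 0 < lam)
    (hlam' : lam < Real.pi ^ 2 / (b - a) ^ 2) :
    ∃! M : ℝ, 0 < M ∧
      (∫ s in Set.Ioo (0:ℝ) 1,
          1 / Real.sqrt (M * s ^ 2 * (1 - s) ^ 2 + lam * (1 - s ^ 2)))
        = (b - a) / 2 := by
  have hc : 0 < b - a := sub_pos.2 hab
  have hT : 0 < (b - a) / 2 := by positivity
  have hslpos : 0 < Real.sqrt lam := Real.sqrt_pos.2 hlam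
  have hsl : Real.sqrt lam < π / (b - a) := by
    rw [Real.sqrt_lt' (by positivity)]
    rw [div_pow]; exact hlam'
  have hTlt : (b - a) / 2 < π / (2 * Real.sqrt lam) := by
    rw [div_lt_div_iff₀ (by norm_num) (by positivity)]
    rw [lt_div_iff₀ hc] at hsl
    nlinarith
  obtain ⟨M₀, hM₀gt, hM₀pos⟩ := (((hlim0aux hlam).eventually
    (eventually_gt_nhds hTlt)).and eventually_mem_nhdsWithin).exists
  obtain ⟨M₁, hM₁lt, hM₁gtM₀⟩ := (((hlimtopaux hlam).eventually
    (eventually_lt_nhds hT)).and (Filter.eventually_gt_atTop M₀)).exists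
  have hM₀pos' : (0:ℝ) < M₀ := hM₀pos
  have hcontOn : ContinuousOn (FF lam) (Set.Icc M₀ M₁) :=
    fun M hM => (hcontaux hlam (lt_of_lt_of_le hM₀pos' hM.1)).continuousWithinAt
  have hmem : (b - a) / 2 ∈ Set.Icc (FF lam M₁) (FF lam M₀) := ⟨hM₁lt.le, hM₀gt.le⟩
  obtain ⟨M, hMmem, hFM⟩ := intermediate_value_Icc' hM₁gtM₀.le hcontOn hmem
  have hMpos : 0 < M := lt_of_lt_of_le hM₀pos' hMmem.1
  refine ⟨M, ⟨hMpos, hFM⟩, ?_⟩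
  rintro M' ⟨hM'pos, hFM'⟩
  by_contra hne
  rcases lt_or_gt_of_ne hne with h | h
  · have := hantiaux hlam hM'pos.le h
    rw [show FF lam M = (b-a)/2 from hFM, show FF lam M' = (b-a)/2 from hFM'] at this
    exact lt_irrefl _ this
  · have := hantiaux hlam hMpos.le h
    rw [show FF lam M = (b-a)/2 from hFM, show FF lam M' = (b-a)/2 from hFM'] at this
    exact lt_irrefl _ this
end

section
/- Let a < b and λ be real numbers with 0 < λ < π²/(b−a)², let M > 0 satisfy ∫₀¹ ds / √(M s²(1−s)² + λ(1−s²)) = (b−a)/2, let Ψ : [0,1] → [a,(a+b)/2] be defined by Ψ(t) = a + ∫₀^t ds / √(M s²(1−s)² + λ(1−s²)), and let u : [a,(a+b)/2] → [0,1] be the inverse function of Ψ. Then u is continuously differentiable on [a,(a+b)/2] with u(a) = 0, u((a+b)/2) = 1, u'(x) = √(M u(x)²(1−u(x))² + λ(1−u(x)²)) for every x ∈ [a,(a+b)/2), and u'((a+b)/2) = 0. -/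
set_option maxHeartbeats 1000000

open MeasureTheory Real Set

lemma stmt12_ratio (F ε ε₁ d e : ℝ) (hF : 0 < F) (hε : 0 < ε)
    (hε₁a : ε₁ ≤ F / 2) (hε₁b : ε₁ ≤ ε * F ^ 2 / 4) (hε₁pos : 0 < ε₁) (hd : 0 < d)
    (h1 : (F - ε₁) * d ≤ e) (h2 : e ≤ (F + ε₁) * d) : |d / e - 1 / F| < ε := by
  have he : 0 < e := lt_of_lt_of_le (by nlinarith) h1
  rw [abs_sub_lt_iff]
  constructor
  · rw [div_sub_div _ _ he.ne' hF.ne', div_lt_iff₀ (by positivity)]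
    nlinarith [mul_pos he hF, mul_pos hε hε₁pos]
  · rw [div_sub_div _ _ hF.ne' he.ne', div_lt_iff₀ (by positivity)]
    nlinarith [mul_pos he hF, mul_pos hε hε₁pos]

/-- Part of the proof of Theorem 2.3: the inverse `u` of
`Ψ(t) = a + ∫₀ᵗ ds/√(M s²(1−s)² + λ(1−s²))` is continuously differentiable on
`[a,(a+b)/2]`, with `u(a) = 0`, `u((a+b)/2) = 1`,
`u'(x) = √(M u(x)²(1−u(x))² + λ(1−u(x)²))` on `[a,(a+b)/2)` and `u'((a+b)/2) = 0`. -/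
theorem stmt12 (a b lam : ℝ) (hab : a < b) (hlam : 0 < lam)
    (hlam' : lam < Real.pi ^ 2 / (b - a) ^ 2)
    (M : ℝ) (hM : 0 < M)
    (hMint : (∫ s in (0:ℝ)..1,
        1 / Real.sqrt (M * s ^ 2 * (1 - s) ^ 2 + lam * (1 - s ^ 2)))
      = (b - a) / 2)
    (Ψ : ℝ → ℝ)
    (hΨ : ∀ t ∈ Set.Icc (0:ℝ) 1, Ψ t = a + ∫ s in (0:ℝ)..t,
        1 / Real.sqrt (M * s ^ 2 * (1 - s) ^ 2 + lam * (1 - s ^ 2)))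
    (hbij : Set.BijOn Ψ (Set.Icc 0 1) (Set.Icc a ((a + b) / 2)))
    (u : ℝ → ℝ)
    (hmaps : Set.MapsTo u (Set.Icc a ((a + b) / 2)) (Set.Icc 0 1))
    (hleft : ∀ t ∈ Set.Icc (0:ℝ) 1, u (Ψ t) = t)
    (hright : ∀ x ∈ Set.Icc a ((a + b) / 2), Ψ (u x) = x) :
    u a = 0 ∧ u ((a + b) / 2) = 1 ∧
    ∃ u' : ℝ → ℝ,
      ContinuousOn u' (Set.Icc a ((a + b) / 2)) ∧
      (∀ x ∈ Set.Icc a ((a + b) / 2),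
        HasDerivWithinAt u (u' x) (Set.Icc a ((a + b) / 2)) x) ∧
      (∀ x ∈ Set.Ico a ((a + b) / 2),
        u' x = Real.sqrt (M * (u x) ^ 2 * (1 - u x) ^ 2 + lam * (1 - (u x) ^ 2))) ∧
      u' ((a + b) / 2) = 0 := by
  set m : ℝ := (a + b) / 2 with hm_def
  set g : ℝ → ℝ := fun s => M * s ^ 2 * (1 - s) ^ 2 + lam * (1 - s ^ 2) with hg_def
  set f : ℝ → ℝ := fun s => 1 / Real.sqrt (g s) with hf_def
  have hgs : ∀ s : ℝ, g s = M * s ^ 2 * (1 - s) ^ 2 + lam * (1 - s ^ 2) := fun s => rfl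
  have hfs : ∀ s : ℝ, f s = 1 / Real.sqrt (g s) := fun s => rfl
  have ham : a < m := by rw [hm_def]; linarith
  -- positivity of g on [0,1)
  have hgpos : ∀ s : ℝ, 0 ≤ s → s < 1 → 0 < g s := by
    intro s h0 h1
    rw [hgs]
    nlinarith [mul_pos hlam (show (0:ℝ) < 1 - s ^ 2 by nlinarith),
      mul_nonneg (mul_nonneg hM.le (sq_nonneg s)) (sq_nonneg (1 - s))]
  have hg1 : g 1 = 0 := by rw [hgs]; ring
  have hfnonneg : ∀ s : ℝ, 0 ≤ f s := fun s => by rw [hfs]; positivity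
  -- integrability
  have hint : IntervalIntegrable f volume 0 1 := by
    by_contra h
    rw [intervalIntegral.integral_undef h] at hMint
    linarith
  have hint' : ∀ t ∈ Icc (0:ℝ) 1, ∀ t' ∈ Icc (0:ℝ) 1, IntervalIntegrable f volume t t' := by
    intro t ht t' ht'
    exact hint.mono_set (by rw [uIcc_of_le (zero_le_one)]; exact uIcc_subset_Icc ht ht')
  -- Ψ differences
  have hdiff : ∀ t ∈ Icc (0:ℝ) 1, ∀ t' ∈ Icc (0:ℝ) 1, Ψ t' - Ψ t = ∫ s in t..t', f s := by
    intro t ht t' ht'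
    rw [hΨ t ht, hΨ t' ht', add_sub_add_left_eq_sub]
    exact intervalIntegral.integral_interval_sub_left
      (hint' 0 (left_mem_Icc.2 zero_le_one) t' ht')
      (hint' 0 (left_mem_Icc.2 zero_le_one) t ht)
  -- strict monotonicity of Ψ
  have hΨmono : StrictMonoOn Ψ (Icc 0 1) := by
    intro t ht t' ht' htt'
    have hle : Ψ t ≤ Ψ t' := by
      have h1 := intervalIntegral.integral_nonneg (f := f) (μ := volume) htt'.le
        (fun s _ => hfnonneg s)
      have hd := hdiff t ht t' ht'
      linarith
    rcases hle.lt_or_eq with h | h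
    · exact h
    · exact absurd (hbij.injOn ht ht' h) (ne_of_lt htt')
  -- endpoint values
  have hΨ0 : Ψ 0 = a := by
    rw [hΨ 0 (left_mem_Icc.2 zero_le_one)]; simp
  have hΨ1 : Ψ 1 = m := by
    rw [hΨ 1 (right_mem_Icc.2 zero_le_one), hMint, hm_def]; ring
  have hua : u a = 0 := by
    have := hleft 0 (left_mem_Icc.2 zero_le_one); rwa [hΨ0] at this
  have hum : u m = 1 := by
    have := hleft 1 (right_mem_Icc.2 zero_le_one); rwa [hΨ1] at this
  -- injectivity transported to u
  have hune : ∀ x ∈ Icc a m, ∀ y ∈ Icc a m, x ≠ y → u x ≠ u y := by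
    intro x hx y hy hxy h
    exact hxy (by rw [← hright x hx, ← hright y hy, h])
  -- continuity of u within Icc a m
  have ucont : ∀ x₀ ∈ Icc a m, ContinuousWithinAt u (Icc a m) x₀ := by
    intro x₀ hx₀
    have ht₀ : u x₀ ∈ Icc (0:ℝ) 1 := hmaps hx₀
    rw [ContinuousWithinAt, tendsto_order]
    constructor
    · intro c hc
      rcases lt_or_ge c 0 with h0 | h0
      · filter_upwards [self_mem_nhdsWithin] with y hy
        exact lt_of_lt_of_le h0 (hmaps hy).1
      · have hc1 : c ∈ Icc (0:ℝ) 1 := ⟨h0, le_trans hc.le ht₀.2⟩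
        have hΨc : Ψ c < x₀ := by
          rw [← hright x₀ hx₀]; exact hΨmono hc1 ht₀ hc
        filter_upwards [self_mem_nhdsWithin,
          mem_nhdsWithin_of_mem_nhds (Ioi_mem_nhds hΨc)] with y hy hy2
        have : Ψ c < Ψ (u y) := by rwa [hright y hy]
        exact (hΨmono.lt_iff_lt hc1 (hmaps hy)).1 this
    · intro c hc
      rcases le_or_gt c 1 with h1 | h1
      · have hc1 : c ∈ Icc (0:ℝ) 1 := ⟨le_trans ht₀.1 hc.le, h1⟩
        have hΨc : x₀ < Ψ c := by
          rw [← hright x₀ hx₀]; exact hΨmono ht₀ hc1 hc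
        filter_upwards [self_mem_nhdsWithin,
          mem_nhdsWithin_of_mem_nhds (Iio_mem_nhds hΨc)] with y hy hy2
        have : Ψ (u y) < Ψ c := by rwa [hright y hy]
        exact (hΨmono.lt_iff_lt (hmaps hy) hc1).1 this
      · filter_upwards [self_mem_nhdsWithin] with y hy
        exact lt_of_le_of_lt (hmaps hy).2 h1
  -- main derivative statement
  have hasderiv : ∀ x₀ ∈ Icc a m, HasDerivWithinAt u (Real.sqrt (g (u x₀))) (Icc a m) x₀ := by
    intro x₀ hx₀
    have ht₀ : u x₀ ∈ Icc (0:ℝ) 1 := hmaps hx₀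
    rw [hasDerivWithinAt_iff_tendsto_slope]
    rcases eq_or_lt_of_le ht₀.2 with h1 | h1
    · -- u x₀ = 1, x₀ = m, derivative 0
      have hx₀m : x₀ = m := by rw [← hright x₀ hx₀, h1, hΨ1]
      have hval : Real.sqrt (g (u x₀)) = 0 := by rw [h1, hg1, Real.sqrt_zero]
      rw [hval, Metric.tendsto_nhds]
      intro ε hε
      set ε' : ℝ := ε / 4 with hε'_def
      have hε' : 0 < ε' := by rw [hε'_def]; positivity
      have hgc : ContinuousAt g 1 := by rw [hg_def]; fun_prop
      obtain ⟨δ, hδ, hδ'⟩ := Metric.continuousAt_iff.1 hgc (ε' ^ 2) (by positivity)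
      set t₁ : ℝ := max (1 - δ / 2) 0 with ht₁_def
      have ht₁0 : 0 ≤ t₁ := le_max_right _ _
      have ht₁1 : t₁ < 1 := by
        rw [ht₁_def, max_lt_iff]; constructor <;> [linarith; norm_num]
      have hfbig : ∀ s : ℝ, t₁ ≤ s → s < 1 → 1 / ε' ≤ f s := by
        intro s hs hs1
        have hgdist : dist s 1 < δ := by
          rw [Real.dist_eq, abs_lt]
          have : 1 - δ / 2 ≤ s := le_trans (le_max_left _ _) hs
          constructor <;> linarith
        have hgsmall : g s < ε' ^ 2 := by
          have := hδ' hgdist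
          rw [Real.dist_eq, hg1, sub_zero] at this
          exact lt_of_le_of_lt (le_abs_self _) this
        have hgp : 0 < g s := hgpos s (le_trans ht₁0 hs) hs1
        rw [hfs, div_le_div_iff₀ hε' (Real.sqrt_pos.2 hgp), one_mul, one_mul]
        calc Real.sqrt (g s) ≤ Real.sqrt (ε' ^ 2) := Real.sqrt_le_sqrt hgsmall.le
          _ = ε' := by rw [Real.sqrt_sq hε'.le]
      have hev : ∀ᶠ y in nhdsWithin x₀ (Icc a m \ {x₀}), t₁ < u y :=
        Filter.Eventually.filter_mono (nhdsWithin_mono x₀ diff_subset)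
          ((ucont x₀ hx₀).eventually (eventually_gt_nhds (by rw [h1]; exact ht₁1)))
      filter_upwards [hev, self_mem_nhdsWithin] with y hy1 hy2
      obtain ⟨hyI, hyne⟩ := hy2
      have hty : u y ∈ Icc (0:ℝ) 1 := hmaps hyI
      have huy1 : u y < 1 := by
        rcases eq_or_lt_of_le hty.2 with h | h
        · exact absurd (by rw [← hright y hyI, h, hΨ1, hx₀m] : y = x₀) hyne
        · exact h
      have hyx : y - x₀ = ∫ s in (u x₀)..(u y), f s := by
        have h := hdiff (u x₀) ht₀ (u y) hty
        rwa [hright x₀ hx₀, hright y hyI] at h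
      have hxy : x₀ - y = ∫ s in (u y)..1, f s := by
        rw [h1, intervalIntegral.integral_symm] at hyx
        linarith
      set s₁ : ℝ := (u y + 1) / 2 with hs₁_def
      have hs₁ : s₁ ∈ Icc (0:ℝ) 1 := ⟨by rw [hs₁_def]; linarith [hty.1], by rw [hs₁_def]; linarith⟩
      have hs₁lt : s₁ < 1 := by rw [hs₁_def]; linarith
      have hlow : (1 / ε') * (s₁ - u y) ≤ ∫ s in (u y)..s₁, f s := by
        have hmono := intervalIntegral.integral_mono_on (f := fun _ => 1 / ε') (g := f)
          (μ := volume) (a := u y) (b := s₁) (by rw [hs₁_def]; linarith) intervalIntegrable_const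
          (hint' (u y) hty s₁ hs₁)
          (fun s hs => hfbig s (le_trans hy1.le hs.1) (lt_of_le_of_lt hs.2 hs₁lt))
        rw [intervalIntegral.integral_const] at hmono
        simpa [smul_eq_mul, mul_comm] using hmono
      have hrest : 0 ≤ ∫ s in s₁..1, f s :=
        intervalIntegral.integral_nonneg hs₁lt.le (fun s _ => hfnonneg s)
      have hsplit : ∫ s in (u y)..1, f s = (∫ s in (u y)..s₁, f s) + ∫ s in s₁..1, f s :=
        (intervalIntegral.integral_add_adjacent_intervals (hint' (u y) hty s₁ hs₁)
          (hint' s₁ hs₁ 1 (right_mem_Icc.2 zero_le_one))).symm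
      -- conclude
      have hkey : (1 - u y) * 2 / ε ≤ x₀ - y := by
        have h2 : (1 / ε') * (s₁ - u y) = (1 - u y) * 2 / ε := by
          rw [hε'_def, hs₁_def]; field_simp; ring
        rw [hxy, hsplit]; rw [h2] at hlow; linarith
      have hx₀ypos : 0 < x₀ - y := by
        have h3 : 0 < (1 - u y) * 2 / ε := div_pos (by linarith) hε
        linarith
      rw [slope_def_field, Real.dist_eq, sub_zero, abs_div]
      rw [abs_of_neg (by rw [h1]; linarith), abs_of_neg (by linarith)]
      rw [div_lt_iff₀ (by linarith)]
      rw [div_le_iff₀ hε] at hkey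
      rw [h1]
      nlinarith
    · -- u x₀ < 1
      have hgp : 0 < g (u x₀) := hgpos (u x₀) ht₀.1 h1
      set F : ℝ := 1 / Real.sqrt (g (u x₀)) with hF_def
      have hFpos : 0 < F := by rw [hF_def]; positivity
      have hsqrt : Real.sqrt (g (u x₀)) = 1 / F := by
        rw [hF_def, one_div_one_div]
      rw [hsqrt, Metric.tendsto_nhds]
      intro ε hε
      set ε₁ := min (F / 2) (ε * F ^ 2 / 4) with hε₁_def
      have hε₁pos : 0 < ε₁ := lt_min (by positivity) (by positivity)
      set t₂ := (u x₀ + 1) / 2 with ht₂_def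
      have ht₂a : u x₀ < t₂ := by rw [ht₂_def]; linarith
      have ht₂b : t₂ < 1 := by rw [ht₂_def]; linarith
      have hfc : ContinuousOn f (Icc 0 t₂) := by
        rw [hf_def]
        apply ContinuousOn.div continuousOn_const
        · exact Real.continuous_sqrt.comp_continuousOn (by rw [hg_def]; fun_prop)
        · intro s hs
          exact (Real.sqrt_pos.2 (hgpos s hs.1 (lt_of_le_of_lt hs.2 ht₂b))).ne'
      have hfct : ContinuousWithinAt f (Icc 0 t₂) (u x₀) := hfc (u x₀) ⟨ht₀.1, ht₂a.le⟩
      obtain ⟨δ, hδpos, hδ⟩ := Metric.continuousWithinAt_iff.1 hfct ε₁ hε₁pos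
      set δ' := min δ (t₂ - u x₀) with hδ'_def
      have hδ'pos : 0 < δ' := lt_min hδpos (by linarith)
      have hfnear : ∀ s : ℝ, 0 ≤ s → |s - u x₀| < δ' → F - ε₁ ≤ f s ∧ f s ≤ F + ε₁ := by
        intro s h0s hsd
        have hst₂ : s ≤ t₂ := by
          have h4 := (abs_lt.1 hsd).2
          have h5 : δ' ≤ t₂ - u x₀ := min_le_right _ _
          linarith
        have hdist : dist s (u x₀) < δ := by
          rw [Real.dist_eq]
          exact lt_of_lt_of_le hsd (min_le_left _ _)
        have h6 := hδ ⟨h0s, hst₂⟩ hdist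
        have hfF : f (u x₀) = F := rfl
        rw [Real.dist_eq, hfF] at h6
        have := abs_lt.1 h6
        constructor <;> linarith [this.1, this.2]
      -- eventually u y is close to u x₀
      have hev : ∀ᶠ y in nhdsWithin x₀ (Icc a m \ {x₀}), dist (u y) (u x₀) < δ' :=
        Filter.Eventually.filter_mono (nhdsWithin_mono x₀ diff_subset)
          (Metric.tendsto_nhds.1 (ucont x₀ hx₀) δ' hδ'pos)
      filter_upwards [hev, self_mem_nhdsWithin] with y hy1 hy2
      obtain ⟨hyI, hyne⟩ := hy2
      have hty : u y ∈ Icc (0:ℝ) 1 := hmaps hyI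
      have hune' : u y ≠ u x₀ := hune y hyI x₀ hx₀ hyne
      have hyx : y - x₀ = ∫ s in (u x₀)..(u y), f s := by
        have h := hdiff (u x₀) ht₀ (u y) hty
        rwa [hright x₀ hx₀, hright y hyI] at h
      rw [Real.dist_eq] at hy1
      rw [slope_def_field, Real.dist_eq]
      have hε₁a : ε₁ ≤ F / 2 := min_le_left _ _
      have hε₁b : ε₁ ≤ ε * F ^ 2 / 4 := min_le_right _ _
      rcases lt_or_gt_of_ne hune' with hlt | hgt
      · -- u y < u x₀
        have hconst : ∀ s ∈ Icc (u y) (u x₀), F - ε₁ ≤ f s ∧ f s ≤ F + ε₁ := by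
          intro s hs
          apply hfnear s (le_trans hty.1 hs.1)
          rw [abs_lt]
          have h7 := abs_lt.1 hy1
          constructor <;> [linarith [hs.1, h7.1]; linarith [hs.2, hδ'pos]]
        have hi1 := intervalIntegral.integral_mono_on (f := fun _ => F - ε₁) (g := f)
          (μ := volume) (a := u y) (b := u x₀) hlt.le intervalIntegrable_const
          (hint' (u y) hty (u x₀) ht₀) (fun s hs => (hconst s hs).1)
        have hi2 := intervalIntegral.integral_mono_on (f := f) (g := fun _ => F + ε₁)
          (μ := volume) (a := u y) (b := u x₀) hlt.le (hint' (u y) hty (u x₀) ht₀)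
          intervalIntegrable_const (fun s hs => (hconst s hs).2)
        rw [intervalIntegral.integral_const] at hi1 hi2
        rw [smul_eq_mul, mul_comm] at hi1 hi2
        have hxy2 : x₀ - y = ∫ s in (u y)..(u x₀), f s := by
          rw [intervalIntegral.integral_symm] at hyx
          linarith
        have hr := stmt12_ratio F ε ε₁ (u x₀ - u y) (x₀ - y) hFpos hε hε₁a hε₁b hε₁pos
          (by linarith) (by rw [hxy2]; exact hi1) (by rw [hxy2]; exact hi2)
        have heq : (u y - u x₀) / (y - x₀) = (u x₀ - u y) / (x₀ - y) := by
          rw [show u y - u x₀ = -(u x₀ - u y) by ring, show y - x₀ = -(x₀ - y) by ring,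
            neg_div_neg_eq]
        rwa [heq]
      · -- u x₀ < u y
        have hconst : ∀ s ∈ Icc (u x₀) (u y), F - ε₁ ≤ f s ∧ f s ≤ F + ε₁ := by
          intro s hs
          apply hfnear s (le_trans ht₀.1 hs.1)
          rw [abs_lt]
          have h7 := abs_lt.1 hy1
          constructor <;> [linarith [hs.1, hδ'pos]; linarith [hs.2, h7.2]]
        have hi1 := intervalIntegral.integral_mono_on (f := fun _ => F - ε₁) (g := f)
          (μ := volume) (a := u x₀) (b := u y) hgt.le intervalIntegrable_const
          (hint' (u x₀) ht₀ (u y) hty) (fun s hs => (hconst s hs).1)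
        have hi2 := intervalIntegral.integral_mono_on (f := f) (g := fun _ => F + ε₁)
          (μ := volume) (a := u x₀) (b := u y) hgt.le (hint' (u x₀) ht₀ (u y) hty)
          intervalIntegrable_const (fun s hs => (hconst s hs).2)
        rw [intervalIntegral.integral_const] at hi1 hi2
        rw [smul_eq_mul, mul_comm] at hi1 hi2
        exact stmt12_ratio F ε ε₁ (u y - u x₀) (y - x₀) hFpos hε hε₁a hε₁b hε₁pos
          (by linarith) (by rw [hyx]; exact hi1) (by rw [hyx]; exact hi2)
  -- assemble
  refine ⟨hua, hum, ⟨fun x => Real.sqrt (g (u x)), ?_, hasderiv, ?_, ?_⟩⟩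
  · have hcu : ContinuousOn u (Icc a m) := fun x hx => ucont x hx
    have hcg : Continuous g := by rw [hg_def]; fun_prop
    exact Real.continuous_sqrt.comp_continuousOn (hcg.comp_continuousOn hcu)
  · intro x hx
    rfl
  · show Real.sqrt (g (u m)) = 0
    rw [hum, hg1, Real.sqrt_zero]
end
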